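/- Let K be a field and R a subring of K. Then R is a multi-valuation ring on K (i.e., R equals an intersection of finitely many, at least one, valuation subrings of K) if and only if the following three conditions hold: (i) every element of K can be written as a/s with a ∈ R and s a nonzero element of R (the fraction field of R is K); (ii) R is a Bezout domain (every finitely generated ideal of R is principal); and (iii) R has only finitely many maximal ideals. -/

import Mathlib

namespace MVRaux

variable {K : Type*} [Field K]

/-- `k` is a unit of the valuation subring `O`, phrased in `K`. -/
def isU (O : ValuationSubring K) (k : K) : Prop := k ∈ O ∧ k⁻¹ ∈ O ∧ k ≠ 0

/-- `k` is a nonunit member of the valuation subring `O`, phrased in `K`. -/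
def isN (O : ValuationSubring K) (k : K) : Prop := k ∈ O ∧ ¬(k⁻¹ ∈ O ∧ k ≠ 0)

variable {O : ValuationSubring K} {a b : K}

lemma isU_one : isU O 1 := ⟨O.one_mem, by simpa using O.one_mem, one_ne_zero⟩

lemma not_isN_one : ¬ isN O 1 := fun h => h.2 ⟨by simpa using O.one_mem, one_ne_zero⟩

lemma isN_zero : isN O 0 := ⟨O.zero_mem, fun h => h.2 rfl⟩

lemma isN.not_isU (h : isN O a) : ¬ isU O a := fun h' => h.2 ⟨h'.2.1, h'.2.2⟩

lemma isN_of_not_isU (ha : a ∈ O) (h : ¬ isU O a) : isN O a :=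
  ⟨ha, fun h' => h ⟨ha, h'.1, h'.2⟩⟩

lemma isU.mul (ha : isU O a) (hb : isU O b) : isU O (a * b) :=
  ⟨O.mul_mem _ _ ha.1 hb.1, by rw [mul_inv]; exact O.mul_mem _ _ ha.2.1 hb.2.1,
    mul_ne_zero ha.2.2 hb.2.2⟩

lemma isU.inv (ha : isU O a) : isU O a⁻¹ :=
  ⟨ha.2.1, by rw [inv_inv]; exact ha.1, inv_ne_zero ha.2.2⟩

lemma isU.pow (ha : isU O a) (m : ℕ) : isU O (a ^ m) := by
  induction m with
  | zero => simpa using (isU_one (O := O))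
  | succ k ih => rw [pow_succ]; exact ih.mul ha

lemma isN.mul_mem (ha : isN O a) (hb : b ∈ O) : isN O (a * b) := by
  refine ⟨O.mul_mem _ _ ha.1 hb, fun h => ?_⟩
  have hb0 : b ≠ 0 := fun h0 => by simp [h0] at h
  have : a⁻¹ ∈ O := by
    have : a⁻¹ = b * (a * b)⁻¹ := by
      rw [mul_inv, mul_comm a⁻¹, ← mul_assoc, mul_inv_cancel₀ hb0, one_mul]
    rw [this]; exact O.mul_mem _ _ hb h.1
  exact ha.2 ⟨this, fun h0 => by simp [h0] at h⟩

lemma isN.neg (ha : isN O a) : isN O (-a) := by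
  have := ha.mul_mem (b := -1) (by simpa using O.neg_mem _ O.one_mem)
  simpa using this

lemma isN.add (ha : isN O a) (hb : isN O b) : isN O (a + b) := by
  refine ⟨O.add_mem _ _ ha.1 hb.1, fun h => ?_⟩
  obtain ⟨hinv, hne⟩ := h
  by_cases ha0 : a = 0
  · exact hb.2 ⟨by simpa [ha0] using hinv, by simpa [ha0] using hne⟩
  by_cases hb0 : b = 0
  · exact ha.2 ⟨by simpa [hb0] using hinv, by simpa [hb0] using hne⟩
  rcases O.mem_or_inv_mem (a / b) with hab | hab
  · have : b⁻¹ = (1 + a / b) * (a + b)⁻¹ := by field_simp; ring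
    exact hb.2 ⟨by rw [this]; exact O.mul_mem _ _ (O.add_mem _ _ O.one_mem hab) hinv, hb0⟩
  · rw [inv_div] at hab
    have : a⁻¹ = (1 + b / a) * (a + b)⁻¹ := by field_simp

    exact ha.2 ⟨by rw [this]; exact O.mul_mem _ _ (O.add_mem _ _ O.one_mem hab) hinv, ha0⟩

lemma isU.add_isN (ha : isU O a) (hb : isN O b) : isU O (a + b) := by
  by_contra h
  have hN : isN O (a + b) := isN_of_not_isU (O.add_mem _ _ ha.1 hb.1) h
  have : isN O a := by simpa using hN.add hb.neg
  exact this.not_isU ha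

lemma isN.add_isU (ha : isN O a) (hb : isU O b) : isU O (a + b) := by
  rw [add_comm]; exact hb.add_isN ha

lemma isU_of_not_isN (ha : a ∈ O) (h : ¬ isN O a) : isU O a := by
  by_contra h'; exact h (isN_of_not_isU ha h')

lemma isU.of_mul_isN (ha : isU O a) (hab : isN O (a * b)) (hb : b ∈ O) : isN O b := by
  refine isN_of_not_isU hb fun hu => hab.not_isU (ha.mul hu)

end MVRaux

namespace MVRaux

variable {K : Type*} [Field K]

/-- geometric partial sums -/
noncomputable def G (z : K) (m : ℕ) : K := ∑ j ∈ Finset.range (m + 1), z ^ j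

lemma G_zero (z : K) : G z 0 = 1 := by simp [G]

lemma G_succ (z : K) (m : ℕ) : G z (m + 1) = z * G z m + 1 := by
  simpa [G] using geom_sum_succ (x := z) (n := m + 1)

lemma G_mem {O : ValuationSubring K} {z : K} (hz : z ∈ O) (m : ℕ) : G z m ∈ O :=
  Subring.sum_mem _ fun j _ => Subring.pow_mem _ hz j

lemma G_diff (z : K) {m m' : ℕ} (h : m < m') :
    G z m' - G z m = z ^ (m + 1) * G z (m' - m - 1) := by
  have h1 : m + 1 ≤ m' + 1 := by omega
  have : G z m' - G z m = ∑ j ∈ Finset.Ico (m + 1) (m' + 1), z ^ j := by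
    rw [Finset.sum_Ico_eq_sub _ h1]; rfl
  rw [this, Finset.sum_Ico_eq_sum_range]
  have h2 : m' + 1 - (m + 1) = (m' - m - 1) + 1 := by omega
  rw [h2, G, Finset.mul_sum]
  exact Finset.sum_congr rfl fun j _ => by rw [← pow_add]

lemma G_reflect {z : K} (hz : z ≠ 0) (m : ℕ) : G z m = z ^ m * G z⁻¹ m := by
  simp only [G]
  rw [Finset.mul_sum]
  rw [← Finset.sum_range_reflect (fun j => z ^ j) (m + 1)]
  refine Finset.sum_congr rfl fun j hj => ?_
  have hj' : j ≤ m := by simpa using Nat.lt_succ_iff.mp (Finset.mem_range.mp hj)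
  have : m + 1 - 1 - j = m - j := by omega
  rw [this, pow_sub₀ z hz hj', inv_pow]

/-- The key denominator lemma: for any `x : K` there is a common denominator `s`
which is moreover a unit in every `O i` containing `x`. -/
lemma exists_denom {n : ℕ} (hn : 0 < n) (O : Fin n → ValuationSubring K) (x : K) :
    ∃ s : K, s ≠ 0 ∧ (∀ i, s ∈ O i) ∧ (∀ i, s * x ∈ O i) ∧
      ∀ i, x ∈ O i → isU (O i) s := by
  classical
  by_cases hT : ∀ i, x ∈ O i
  · exact ⟨1, one_ne_zero, fun i => (O i).one_mem, fun i => by simpa using hT i,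
      fun i _ => isU_one⟩
  push_neg at hT
  obtain ⟨i₀, hi₀⟩ := hT
  have hx0 : x ≠ 0 := fun h => hi₀ (h ▸ (O i₀).zero_mem)
  -- bad indices
  set Bad : Fin n → ℕ → Prop := fun i m => isU (O i) x ∧ isN (O i) (G x m) with hBad
  have not_bad0 : ∀ i, ¬ Bad i 0 := fun i h => not_isN_one (by simpa [G_zero] using h.2)
  have bad_diff : ∀ i {m m'}, Bad i m → Bad i m' → m < m' → Bad i (m' - m - 1) := by
    intro i m m' hm hm' hlt
    refine ⟨hm.1, ?_⟩
    have hsub : isN (O i) (G x m' - G x m) := by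
      simpa [sub_eq_add_neg] using hm'.2.add hm.2.neg
    rw [G_diff x hlt] at hsub
    exact (hm.1.pow (m + 1)).of_mul_isN hsub (G_mem hm.1.1 _)
  set d : Fin n → ℕ := fun i => if h : ∃ m, Bad i m then Nat.find h + 1 else 2 with hd
  have hd2 : ∀ i, 2 ≤ d i := by
    intro i
    by_cases h : ∃ m, Bad i m
    · have he : d i = Nat.find h + 1 := by simp only [hd]; rw [dif_pos h]
      have : Nat.find h ≠ 0 := fun h0 => not_bad0 i (h0 ▸ Nat.find_spec h)
      omega
    · have he : d i = 2 := by simp only [hd]; rw [dif_neg h]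
      omega
  have hddvd : ∀ i m, Bad i m → d i ∣ m + 1 := by
    intro i m
    induction m using Nat.strong_induction_on with
    | _ m ih =>
      intro hm
      have hex : ∃ m, Bad i m := ⟨m, hm⟩
      have hdi : d i = Nat.find hex + 1 := by rw [hd]; exact dif_pos hex
      have hble : Nat.find hex ≤ m := Nat.find_min' hex hm
      rcases eq_or_lt_of_le hble with heq | hlt
      · rw [hdi, ← heq]
      · have hb : Bad i (m - Nat.find hex - 1) := bad_diff i (Nat.find_spec hex) hm hlt
        have hlt2 : m - Nat.find hex - 1 < m := by omega
        have := ih _ hlt2 hb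
        have h2 : m - Nat.find hex - 1 + 1 = m - Nat.find hex := by omega
        rw [h2] at this
        have : d i ∣ (m - Nat.find hex) + (Nat.find hex + 1) := dvd_add this (hdi ▸ dvd_refl _)
        simpa [show m - Nat.find hex + (Nat.find hex + 1) = m + 1 by omega] using this
  have key : ∃ m₀ : ℕ, 1 ≤ m₀ ∧ ∀ i, ¬ Bad i m₀ := by
    refine ⟨∏ i, d i, Nat.one_le_iff_ne_zero.mpr
      (Finset.prod_ne_zero_iff.mpr fun i _ => by have := hd2 i; omega), ?_⟩
    intro i hbad
    have h1 : d i ∣ (∏ i, d i) + 1 := hddvd i _ hbad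
    have h2 : d i ∣ ∏ i, d i := Finset.dvd_prod_of_mem d (Finset.mem_univ i)
    have h3 : d i ∣ 1 := by simpa using Nat.dvd_sub h1 h2
    have := Nat.le_of_dvd one_pos h3
    have := hd2 i
    omega
  obtain ⟨m₀, hm₀pos, hnotbad⟩ := key
  -- the element G x m₀ is a unit at all places where x ∈ O i
  have hGunit : ∀ i, x ∈ O i → isU (O i) (G x m₀) := by
    intro i hxi
    by_cases hu : isU (O i) x
    · by_contra h
      exact hnotbad i ⟨hu, isN_of_not_isU (G_mem hxi _) h⟩
    · have hxN : isN (O i) x := isN_of_not_isU hxi hu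
      have hsucc : m₀ = (m₀ - 1) + 1 := by omega
      have : G x m₀ = x * G x (m₀ - 1) + 1 := by rw [hsucc]; exact G_succ x _
      rw [this]
      exact (hxN.mul_mem (G_mem hxi _)).add_isU isU_one
  -- at places where x ∉ O i
  have hHunit : ∀ i, x ∉ O i → isU (O i) (G x⁻¹ m₀) := by
    intro i hxi
    have hxinv : x⁻¹ ∈ O i := (O i).mem_or_inv_mem x |>.resolve_left hxi
    have hxinvN : isN (O i) x⁻¹ := ⟨hxinv, fun h => hxi (by rw [inv_inv] at h; exact h.1)⟩
    have hsucc : m₀ = (m₀ - 1) + 1 := by omega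
    have : G x⁻¹ m₀ = x⁻¹ * G x⁻¹ (m₀ - 1) + 1 := by rw [hsucc]; exact G_succ _ _
    rw [this]
    exact (hxinvN.mul_mem (G_mem hxinv _)).add_isU isU_one
  have hG0 : G x m₀ ≠ 0 := by
    rw [G_reflect hx0]
    exact mul_ne_zero (pow_ne_zero _ hx0) (hHunit i₀ hi₀).2.2
  refine ⟨(G x m₀)⁻¹, inv_ne_zero hG0, ?_, ?_, ?_⟩
  · intro i
    by_cases hxi : x ∈ O i
    · exact (hGunit i hxi).2.1
    · have hxinv : x⁻¹ ∈ O i := (O i).mem_or_inv_mem x |>.resolve_left hxi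
      have : (G x m₀)⁻¹ = (x⁻¹) ^ m₀ * (G x⁻¹ m₀)⁻¹ := by
        rw [G_reflect hx0, mul_inv, inv_pow]
      rw [this]
      exact (O i).mul_mem _ _ (Subring.pow_mem _ hxinv _) (hHunit i hxi).2.1
  · intro i
    by_cases hxi : x ∈ O i
    · exact (O i).mul_mem _ _ (hGunit i hxi).2.1 hxi
    · have hxinv : x⁻¹ ∈ O i := (O i).mem_or_inv_mem x |>.resolve_left hxi
      have hsucc : m₀ = (m₀ - 1) + 1 := by omega
      have hxx : (x⁻¹) ^ m₀ * x = (x⁻¹) ^ (m₀ - 1) := by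
        conv_lhs => rw [hsucc, pow_succ]
        rw [mul_assoc, inv_mul_cancel₀ hx0, mul_one]
      have : (G x m₀)⁻¹ * x = (x⁻¹) ^ (m₀ - 1) * (G x⁻¹ m₀)⁻¹ := by
        calc (G x m₀)⁻¹ * x = (x⁻¹) ^ m₀ * x * (G x⁻¹ m₀)⁻¹ := by
              rw [G_reflect hx0, mul_inv, inv_pow]; ring
          _ = (x⁻¹) ^ (m₀ - 1) * (G x⁻¹ m₀)⁻¹ := by rw [hxx]
      rw [this]
      exact (O i).mul_mem _ _ (Subring.pow_mem _ hxinv _) (hHunit i hxi).2.1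
  · intro i hxi
    exact (hGunit i hxi).inv

end MVRaux

namespace MVRaux

/-- CRT-style congruence: an element that is `0 mod m` for maximal ideals satisfying `Q`
and `1 mod m` for the others. -/
lemma exists_congruence {A : Type*} [CommRing A] (s : Finset (Ideal A))
    (hmax : ∀ m ∈ s, m.IsMaximal) (Q : Ideal A → Prop) :
    ∃ e : A, ∀ m ∈ s, (Q m → e ∈ m) ∧ (¬ Q m → e - 1 ∈ m) := by
  classical
  have hsup : (⨅ m ∈ s.filter Q, m) ⊔ (⨅ m ∈ s.filter (fun m => ¬ Q m), m) = ⊤ := by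
    apply Ideal.sup_iInf_eq_top
    intro m' hm'
    rw [Finset.mem_filter] at hm'
    apply Ideal.iInf_sup_eq_top
    intro m hm
    rw [Finset.mem_filter] at hm
    exact (hmax m hm.1).coprime_of_ne (hmax m' hm'.1) (fun h => hm'.2 (h ▸ hm.2))
  have h1 : (1 : A) ∈ (⨅ m ∈ s.filter Q, m) ⊔ (⨅ m ∈ s.filter (fun m => ¬ Q m), m) := by
    rw [hsup]; exact Submodule.mem_top
  obtain ⟨u, hu, v, hv, huv⟩ := Submodule.mem_sup.mp h1
  simp only [Ideal.mem_iInf] at hu hv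
  refine ⟨u, fun m hm => ⟨fun hQ => ?_, fun hQ => ?_⟩⟩
  · exact hu m (Finset.mem_filter.mpr ⟨hm, hQ⟩)
  · have hvm : v ∈ m := hv m (Finset.mem_filter.mpr ⟨hm, hQ⟩)
    have : u - 1 = -v := by rw [← huv]; ring
    rw [this]; exact m.neg_mem hvm

end MVRaux

namespace MVRaux

variable {K : Type*} [Field K]

section Forward

variable (R : Subring K) {n : ℕ} (hn : 0 < n) (O : Fin n → ValuationSubring K)
  (hmem : ∀ k : K, k ∈ R ↔ ∀ i, k ∈ O i)

/-- the center of `O i` on `R`. -/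
def centerIdeal (i : Fin n) : Ideal ↥R where
  carrier := {r : ↥R | isN (O i) (r : K)}
  zero_mem' := by simpa using (isN_zero (O := O i))
  add_mem' := fun {a b} ha hb => by
    have : ((a + b : ↥R) : K) = (a : K) + (b : K) := rfl
    simpa [Set.mem_setOf_eq, this] using ha.add hb
  smul_mem' := fun c r hr => by
    have h1 : ((c • r : ↥R) : K) = (c : K) * (r : K) := rfl
    have h2 : (c : K) ∈ O i := (hmem (c : K)).mp c.2 i
    simpa [Set.mem_setOf_eq, h1, mul_comm] using hr.mul_mem h2

lemma mem_centerIdeal (i : Fin n) (r : ↥R) :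
    r ∈ centerIdeal R O hmem i ↔ isN (O i) (r : K) := Iff.rfl

lemma centerIdeal_prime (i : Fin n) : (centerIdeal R O hmem i).IsPrime := by
  constructor
  · intro htop
    have h1 : (1 : ↥R) ∈ centerIdeal R O hmem i := htop ▸ Submodule.mem_top
    exact not_isN_one ((mem_centerIdeal R O hmem i 1).mp h1)
  · intro r s hrs
    by_contra hcon
    push_neg at hcon
    have hrU : isU (O i) (r : K) :=
      isU_of_not_isN ((hmem _).mp r.2 i) (fun h => hcon.1 ((mem_centerIdeal R O hmem i r).mpr h))
    have hsU : isU (O i) (s : K) :=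
      isU_of_not_isN ((hmem _).mp s.2 i) (fun h => hcon.2 ((mem_centerIdeal R O hmem i s).mpr h))
    have : isN (O i) ((r : K) * (s : K)) := (mem_centerIdeal R O hmem i (r * s)).mp hrs
    exact this.not_isU (hrU.mul hsU)

lemma maximal_eq_center (hn : 0 < n) (m : Ideal ↥R) (hm : m.IsMaximal) :
    ∃ i : Fin n, m = centerIdeal R O hmem i := by
  classical
  have i₀ : Fin n := ⟨0, hn⟩
  have hsub : (m : Set ↥R) ⊆
      ⋃ i ∈ ((Finset.univ : Finset (Fin n)) : Set (Fin n)), ↑(centerIdeal R O hmem i) := by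
    intro r hr
    by_contra hnot
    simp only [Set.mem_iUnion, SetLike.mem_coe, Finset.coe_univ, Set.mem_univ, exists_prop,
      true_and, not_exists] at hnot
    have hU : ∀ i, isU (O i) (r : K) := fun i =>
      isU_of_not_isN ((hmem _).mp r.2 i)
        (fun h => hnot i ((mem_centerIdeal R O hmem i r).mpr h))
    have hrinv : (r : K)⁻¹ ∈ R := (hmem _).mpr fun i => (hU i).2.1
    have hrne : (r : K) ≠ 0 := (hU i₀).2.2
    have hunit : IsUnit r := by
      refine IsUnit.of_mul_eq_one (a := r) ⟨(r : K)⁻¹, hrinv⟩ (Subtype.ext ?_)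
      have : ((r * ⟨(r : K)⁻¹, hrinv⟩ : ↥R) : K) = (r : K) * (r : K)⁻¹ := rfl
      rw [this, mul_inv_cancel₀ hrne]; rfl
    exact hm.ne_top (m.eq_top_of_isUnit_mem hr hunit)
  rw [Ideal.subset_union_prime i₀ i₀ (fun i _ _ _ => centerIdeal_prime R O hmem i)] at hsub
  obtain ⟨i, _, hle⟩ := hsub
  exact ⟨i, hm.eq_of_le (centerIdeal_prime R O hmem i).ne_top hle⟩

/-- the denominator ideal trick: glue local memberships back into `R`. -/
lemma mem_of_forall_center (hmem : ∀ k : K, k ∈ R ↔ ∀ i, k ∈ O i) (hn : 0 < n)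
    (idx : ∀ m : Ideal ↥R, m.IsMaximal → Fin n)
    (hidx : ∀ m hm, m = centerIdeal R O hmem (idx m hm))
    (k : K) (hk : ∀ m hm, k ∈ O (idx m hm)) : k ∈ R := by
  classical
  let I : Ideal ↥R :=
    { carrier := {r : ↥R | (r : K) * k ∈ R}
      zero_mem' := by simpa using R.zero_mem
      add_mem' := fun {a b} ha hb => by
        show ((a + b : ↥R) : K) * k ∈ R
        have h1 : ((a + b : ↥R) : K) = (a : K) + (b : K) := rfl
        rw [h1, add_mul]; exact R.add_mem ha hb
      smul_mem' := fun c r hr => by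
        show ((c • r : ↥R) : K) * k ∈ R
        have h1 : ((c • r : ↥R) : K) = (c : K) * (r : K) := rfl
        rw [h1, mul_assoc]; exact R.mul_mem c.2 hr }
  by_cases hI : I = ⊤
  · have h1 : (1 : ↥R) ∈ I := hI ▸ Submodule.mem_top
    have h2 : ((1 : ↥R) : K) * k ∈ R := h1
    simpa using h2
  obtain ⟨m, hm, hle⟩ := Ideal.exists_le_maximal I hI
  obtain ⟨s, hs0, hsR, hsk, hsU⟩ := exists_denom hn O k
  have hsmem : s ∈ R := (hmem s).mpr hsR
  have hsI : (⟨s, hsmem⟩ : ↥R) ∈ I := by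
    show s * k ∈ R
    exact (hmem _).mpr hsk
  have hsm := hle hsI
  rw [hidx m hm] at hsm
  exact absurd (hsU _ (hk m hm))
    (((mem_centerIdeal R O hmem (idx m hm) _).mp hsm).not_isU)

lemma span_pair_principal (hmem : ∀ k : K, k ∈ R ↔ ∀ i, k ∈ O i) (hn : 0 < n)
    (x y : ↥R) (hx : x ≠ 0) (hy : y ≠ 0) :
    (Ideal.span {x, y} : Ideal ↥R).IsPrincipal := by
  classical
  haveI : Nontrivial ↥R := ⟨⟨0, 1, fun h => zero_ne_one (congrArg Subtype.val h : (0 : K) = 1)⟩⟩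
  have hxK : (x : K) ≠ 0 := fun h => hx (Subtype.ext h)
  have hyK : (y : K) ≠ 0 := fun h => hy (Subtype.ext h)
  have hMfin : {I : Ideal ↥R | I.IsMaximal}.Finite :=
    Set.Finite.subset (Set.finite_range (centerIdeal R O hmem))
      (fun m hm => by obtain ⟨i, hi⟩ := maximal_eq_center R O hmem hn m hm; exact ⟨i, hi.symm⟩)
  choose idx hidx using maximal_eq_center R O hmem hn
  set F := hMfin.toFinset with hF
  set Q : Ideal ↥R → Prop := fun m => ∃ hm : m.IsMaximal, (x : K) / (y : K) ∈ O (idx m hm)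
    with hQ
  obtain ⟨e, he⟩ := exists_congruence F (fun m hm => hMfin.mem_toFinset.mp hm) Q
  set d : ↥R := e * x + (1 - e) * y with hd
  have hdK : (d : K) = (e : K) * (x : K) + (1 - (e : K)) * (y : K) := by
    rw [hd]; push_cast; ring
  have main : ∀ (m : Ideal ↥R) (hm : m.IsMaximal),
      (isU (O (idx m hm)) ((d : K) / (y : K)) ∧ (x : K) / (y : K) ∈ O (idx m hm)) ∨
      (isU (O (idx m hm)) ((d : K) / (x : K)) ∧ (y : K) / (x : K) ∈ O (idx m hm)) := by
    intro m hm
    have hmF : m ∈ F := hMfin.mem_toFinset.mpr hm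
    have hem := he m hmF
    by_cases hq : (x : K) / (y : K) ∈ O (idx m hm)
    · left
      refine ⟨?_, hq⟩
      have heN : isN (O (idx m hm)) (e : K) := by
        have h1 : e ∈ m := hem.1 ⟨hm, hq⟩
        rw [hidx m hm] at h1
        exact (mem_centerIdeal R O hmem _ e).mp h1
      have hid : (d : K) / (y : K) = (e : K) * ((x : K) / (y : K)) + (1 - (e : K)) := by
        rw [hdK]; field_simp
      rw [hid]
      have h2 : isU (O (idx m hm)) (1 - (e : K)) := by
        have h3 : (1 : K) - (e : K) = 1 + -(e : K) := by ring
        rw [h3]; exact isU_one.add_isN heN.neg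
      exact (heN.mul_mem hq).add_isU h2
    · right
      have hq' : (y : K) / (x : K) ∈ O (idx m hm) := by
        have h1 := ((O (idx m hm)).mem_or_inv_mem ((x : K) / (y : K))).resolve_left hq
        rwa [inv_div] at h1
      refine ⟨?_, hq'⟩
      have heN : isN (O (idx m hm)) ((e : K) - 1) := by
        have h1 : e - 1 ∈ m := hem.2 fun hQm => by
          obtain ⟨hm', hmem'⟩ := hQm
          exact hq ((Subsingleton.elim hm' hm) ▸ hmem')
        rw [hidx m hm] at h1
        have h2 := (mem_centerIdeal R O hmem _ (e - 1)).mp h1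
        have h3 : ((e - 1 : ↥R) : K) = (e : K) - 1 := by push_cast; ring
        rwa [h3] at h2
      have hid : (d : K) / (x : K) = (e : K) + (1 - (e : K)) * ((y : K) / (x : K)) := by
        rw [hdK]; field_simp
      rw [hid]
      have h2 : isU (O (idx m hm)) (e : K) := by
        have h3 : (e : K) = 1 + ((e : K) - 1) := by ring
        rw [h3]; exact isU_one.add_isN heN
      have h4 : isN (O (idx m hm)) ((1 - (e : K)) * ((y : K) / (x : K))) := by
        have h5 : (1 : K) - (e : K) = -((e : K) - 1) := by ring
        rw [h5]; exact heN.neg.mul_mem hq'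
      exact h2.add_isN h4
  have hdK0 : (d : K) ≠ 0 := by
    obtain ⟨m, hm⟩ := Ideal.exists_maximal ↥R
    rcases main m hm with ⟨h, _⟩ | ⟨h, _⟩
    · exact fun h0 => h.2.2 (by rw [h0, zero_div])
    · exact fun h0 => h.2.2 (by rw [h0, zero_div])
  have hxd : (x : K) / (d : K) ∈ R := by
    refine mem_of_forall_center R O hmem hn idx hidx _ fun m hm => ?_
    rcases main m hm with ⟨hU, hmem'⟩ | ⟨hU, _⟩
    · have hid : ((x : K) / (y : K)) * ((d : K) / (y : K))⁻¹ = (x : K) / (d : K) := by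
        rw [inv_div, div_mul_div_comm, mul_comm (x : K) (y : K), mul_div_mul_left _ _ hyK]
      rw [← hid]
      exact (O _).mul_mem _ _ hmem' hU.2.1
    · have hid : ((d : K) / (x : K))⁻¹ = (x : K) / (d : K) := by rw [inv_div]
      rw [← hid]
      exact hU.2.1
  have hyd : (y : K) / (d : K) ∈ R := by
    refine mem_of_forall_center R O hmem hn idx hidx _ fun m hm => ?_
    rcases main m hm with ⟨hU, _⟩ | ⟨hU, hmem'⟩
    · have hid : ((d : K) / (y : K))⁻¹ = (y : K) / (d : K) := by rw [inv_div]
      rw [← hid]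
      exact hU.2.1
    · have hid : ((y : K) / (x : K)) * ((d : K) / (x : K))⁻¹ = (y : K) / (d : K) := by
        rw [inv_div, div_mul_div_comm, mul_comm (y : K) (x : K), mul_div_mul_left _ _ hxK]
      rw [← hid]
      exact (O _).mul_mem _ _ hmem' hU.2.1
  refine ⟨⟨d, le_antisymm ?_ ?_⟩⟩
  · rw [Ideal.span_le]
    intro z hz
    simp only [Set.mem_insert_iff, Set.mem_singleton_iff] at hz
    rcases hz with h | h <;> rw [h]
    · rw [SetLike.mem_coe]
      refine Ideal.mem_span_singleton'.mpr ⟨⟨(x : K) / (d : K), hxd⟩, Subtype.ext ?_⟩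
      show ((x : K) / (d : K)) * (d : K) = (x : K)
      rw [div_mul_cancel₀ _ hdK0]
    · rw [SetLike.mem_coe]
      refine Ideal.mem_span_singleton'.mpr ⟨⟨(y : K) / (d : K), hyd⟩, Subtype.ext ?_⟩
      show ((y : K) / (d : K)) * (d : K) = (y : K)
      rw [div_mul_cancel₀ _ hdK0]
  · refine Ideal.span_le.mpr ?_
    rw [Set.singleton_subset_iff, SetLike.mem_coe]
    exact Ideal.mem_span_pair.mpr ⟨e, 1 - e, rfl⟩

end Forward

end MVRaux

namespace MVRaux

section Backward

variable {K : Type*} [Field K] (R : Subring K)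

/-- localization of `R` at a maximal ideal, as a valuation subring of `K`. -/
lemma exists_localization_valuationSubring
    (hFrac : ∀ x : K, ∃ a s : K, a ∈ R ∧ s ∈ R ∧ s ≠ 0 ∧ x = a / s)
    (hBez : ∀ I : Ideal ↥R, I.FG → I.IsPrincipal)
    (m : Ideal ↥R) (hm : m.IsMaximal) :
    ∃ V : ValuationSubring K, ∀ k : K,
      (k ∈ V ↔ ∃ a s : ↥R, s ∉ m ∧ k = (a : K) / (s : K)) := by
  classical
  have h1m : (1 : ↥R) ∉ m := fun h => hm.ne_top ((Ideal.eq_top_iff_one m).mpr h)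
  have hs0 : ∀ s : ↥R, s ∉ m → (s : K) ≠ 0 := fun s hs h0 =>
    hs (by rw [show s = (0 : ↥R) from Subtype.ext h0]; exact m.zero_mem)
  let S : Subring K :=
    { carrier := {k : K | ∃ a s : ↥R, s ∉ m ∧ k = (a : K) / (s : K)}
      one_mem' := ⟨1, 1, h1m, by simp⟩
      zero_mem' := ⟨0, 1, h1m, by simp⟩
      mul_mem' := by
        rintro k1 k2 ⟨a1, s1, hs1, rfl⟩ ⟨a2, s2, hs2, rfl⟩
        refine ⟨a1 * a2, s1 * s2, fun h => (hm.isPrime.mem_or_mem h).elim hs1 hs2, ?_⟩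
        push_cast
        rw [div_mul_div_comm]
      add_mem' := by
        rintro k1 k2 ⟨a1, s1, hs1, rfl⟩ ⟨a2, s2, hs2, rfl⟩
        refine ⟨a1 * s2 + a2 * s1, s1 * s2, fun h => (hm.isPrime.mem_or_mem h).elim hs1 hs2, ?_⟩
        push_cast
        rw [div_add_div _ _ (hs0 s1 hs1) (hs0 s2 hs2)]
        ring_nf
      neg_mem' := by
        rintro k ⟨a, s, hs, rfl⟩
        exact ⟨-a, s, hs, by push_cast; rw [neg_div]⟩ }
  refine ⟨ValuationSubring.ofSubring S ?_, fun k => Iff.rfl⟩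
  intro k
  by_cases hk : k = 0
  · exact Or.inl (hk ▸ S.zero_mem)
  obtain ⟨a, s, ha, hs, hsne, hk_eq⟩ := hFrac k
  have hane : a ≠ 0 := fun h0 => hk (by rw [hk_eq, h0, zero_div])
  set aR : ↥R := ⟨a, ha⟩
  set sR : ↥R := ⟨s, hs⟩
  have hprin := hBez (Ideal.span {aR, sR}) ⟨{aR, sR}, by simp⟩
  obtain ⟨δ, hδeq⟩ := hprin.principal
  have haδ : aR ∈ Submodule.span ↥R {δ} := hδeq ▸ Ideal.subset_span (Set.mem_insert _ _)
  have hsδ : sR ∈ Submodule.span ↥R {δ} := hδeq ▸ Ideal.subset_span (by simp)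
  obtain ⟨c, hc⟩ := Ideal.mem_span_singleton'.mp haδ
  obtain ⟨c', hc'⟩ := Ideal.mem_span_singleton'.mp hsδ
  have hδmem : δ ∈ Ideal.span {aR, sR} := by
    have h0 : δ ∈ Submodule.span ↥R {δ} := Ideal.mem_span_singleton_self δ
    rwa [← hδeq] at h0
  obtain ⟨u, v, huv⟩ := Ideal.mem_span_pair.mp hδmem
  have hδ0 : δ ≠ 0 := by
    intro h0
    apply hsne
    have : c' * δ = sR := hc'
    rw [h0, mul_zero] at this
    exact congrArg Subtype.val this.symm
  have hδK0 : (δ : K) ≠ 0 := fun h => hδ0 (Subtype.ext h)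
  have hcop : u * c + v * c' = 1 := by
    have h1 : (u * c + v * c') * δ = 1 * δ := by
      rw [one_mul, add_mul, mul_assoc, mul_assoc, hc, hc', huv]
    exact mul_right_cancel₀ hδ0 h1
  have hnotboth : c ∉ m ∨ c' ∉ m := by
    by_contra h
    push_neg at h
    exact hm.ne_top ((Ideal.eq_top_iff_one m).mpr
      (hcop ▸ m.add_mem (m.mul_mem_left u h.1) (m.mul_mem_left v h.2)))
  have hcK : (c : K) * (δ : K) = a := congrArg Subtype.val hc
  have hc'K : (c' : K) * (δ : K) = s := congrArg Subtype.val hc'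
  by_cases hc'm : c' ∉ m
  · left
    refine ⟨c, c', hc'm, ?_⟩
    rw [hk_eq, ← hcK, ← hc'K, mul_div_mul_right _ _ hδK0]
  · right
    have hcm : c ∉ m := hnotboth.resolve_right hc'm
    refine ⟨c', c, hcm, ?_⟩
    rw [hk_eq, ← hcK, ← hc'K, ← mul_div_mul_right (c' : K) (c : K) hδK0]
    rw [inv_div]

end Backward

end MVRaux

open MVRaux in
/-- Let `K` be a field and `R` a subring of `K`.  Then `R` is a multi-valuation ring on
`K` (an intersection of finitely many, at least one, valuation subrings of `K`) iff:
(i) every element of `K` is a ratio `a/s` of elements of `R` with `s ≠ 0`;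
(ii) `R` is a Bezout domain (every finitely generated ideal is principal); and
(iii) `R` has only finitely many maximal ideals. -/
theorem multiValuationRing_iff_bezout_finite_maximal_ideals
    {K : Type*} [Field K] (R : Subring K) :
    (∃ n : ℕ, 0 < n ∧ ∃ O : Fin n → ValuationSubring K,
        R = ⨅ i, (O i).toSubring) ↔
      ((∀ x : K, ∃ a s : K, a ∈ R ∧ s ∈ R ∧ s ≠ 0 ∧ x = a / s) ∧
       (∀ I : Ideal ↥R, I.FG → I.IsPrincipal) ∧
       {I : Ideal ↥R | I.IsMaximal}.Finite) := by
  classical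
  constructor
  · rintro ⟨n, hn, O, hR⟩
    have hmem : ∀ k : K, k ∈ R ↔ ∀ i, k ∈ O i := fun k => by
      rw [hR]; exact Subring.mem_iInf
    have hMfin : {I : Ideal ↥R | I.IsMaximal}.Finite :=
      Set.Finite.subset (Set.finite_range (centerIdeal R O hmem))
        (fun m hm => by
          obtain ⟨i, hi⟩ := maximal_eq_center R O hmem hn m hm; exact ⟨i, hi.symm⟩)
    refine ⟨?_, ?_, hMfin⟩
    · intro x
      obtain ⟨s, hs0, hsR, hsx, _⟩ := exists_denom hn O x
      exact ⟨s * x, s, (hmem _).mpr hsx, (hmem _).mpr hsR, hs0,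
        (mul_div_cancel_left₀ x hs0).symm⟩
    · have hpair : ∀ x y : ↥R, (Ideal.span {x, y} : Ideal ↥R).IsPrincipal := by
        intro x y
        by_cases hx : x = 0
        · subst hx
          exact ⟨⟨y, by
            rw [show ({(0 : ↥R), y} : Set ↥R) = insert 0 {y} from rfl]
            exact Submodule.span_insert_zero⟩⟩
        by_cases hy : y = 0
        · subst hy
          exact ⟨⟨x, by
            rw [Set.pair_comm, show ({(0 : ↥R), x} : Set ↥R) = insert 0 {x} from rfl]
            exact Submodule.span_insert_zero⟩⟩
        exact span_pair_principal R O hmem hn x y hx hy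
      haveI : IsBezout ↥R := IsBezout.iff_span_pair_isPrincipal.mpr hpair
      exact fun I hI => IsBezout.isPrincipal_of_FG I hI
  · rintro ⟨hFrac, hBez, hFin⟩
    haveI : Nontrivial ↥R := ⟨⟨0, 1, fun h => zero_ne_one (congrArg Subtype.val h : (0 : K) = 1)⟩⟩
    choose V hV using exists_localization_valuationSubring R hFrac hBez
    have hRV : ∀ (r : K), r ∈ R → ∀ m hm, r ∈ V m hm := by
      intro r hr m hm
      refine (hV m hm r).mpr ⟨⟨r, hr⟩, 1, fun h => hm.ne_top ((Ideal.eq_top_iff_one m).mpr h),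
        by simp⟩
    have hglue : ∀ k : K, (∀ m hm, k ∈ V m hm) → k ∈ R := by
      intro k hk
      let I : Ideal ↥R :=
        { carrier := {r : ↥R | (r : K) * k ∈ R}
          zero_mem' := by simpa using R.zero_mem
          add_mem' := fun {a b} ha hb => by
            show ((a + b : ↥R) : K) * k ∈ R
            have h1 : ((a + b : ↥R) : K) = (a : K) + (b : K) := rfl
            rw [h1, add_mul]; exact R.add_mem ha hb
          smul_mem' := fun c r hr => by
            show ((c • r : ↥R) : K) * k ∈ R
            have h1 : ((c • r : ↥R) : K) = (c : K) * (r : K) := rfl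
            rw [h1, mul_assoc]; exact R.mul_mem c.2 hr }
      by_cases hI : I = ⊤
      · have h1 : (1 : ↥R) ∈ I := hI ▸ Submodule.mem_top
        have h2 : ((1 : ↥R) : K) * k ∈ R := h1
        simpa using h2
      obtain ⟨m, hm, hle⟩ := Ideal.exists_le_maximal I hI
      obtain ⟨a, s, hs, rfl⟩ := (hV m hm k).mp (hk m hm)
      have hsK : (s : K) ≠ 0 := fun h0 =>
        hs (by rw [show s = (0 : ↥R) from Subtype.ext h0]; exact m.zero_mem)
      have hsI : s ∈ I := by
        show (s : K) * ((a : K) / (s : K)) ∈ R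
        rw [mul_div_cancel₀ _ hsK]
        exact a.2
      exact absurd (hle hsI) hs
    obtain ⟨m₀, hm₀⟩ := Ideal.exists_maximal ↥R
    set F : Finset (Ideal ↥R) := hFin.toFinset with hF
    have hn : 0 < F.card := Finset.card_pos.mpr ⟨m₀, hFin.mem_toFinset.mpr hm₀⟩
    refine ⟨F.card, hn, fun j => V ((F.equivFin.symm j) : Ideal ↥R)
      (hFin.mem_toFinset.mp (F.equivFin.symm j).2), ?_⟩
    apply le_antisymm
    · intro r hr
      exact Subring.mem_iInf.mpr fun j => hRV r hr _ _
    · intro k hk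
      apply hglue
      intro m hm
      have hmF : m ∈ F := hFin.mem_toFinset.mpr hm
      have h2 : (F.equivFin.symm (F.equivFin ⟨m, hmF⟩) : Ideal ↥R) = m := by
        rw [Equiv.symm_apply_apply]
      have h1 := Subring.mem_iInf.mp hk (F.equivFin ⟨m, hmF⟩)
      obtain ⟨a, s, hs, rfl⟩ := (hV _ _ _).mp h1
      rw [h2] at hs
      exact (hV m hm _).mpr ⟨a, s, hs, rfl⟩
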